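/- arXiv:2010.00895 — 2 statements merged into one kernel-verified Lean document; each statement's English description precedes it below -/
import Mathlib

section
/- Let τ ∈ ℝ \ {0,±1}, v > 0, and ω > v²/(τ²+1)². Then there exists C > 0 such that for every u ∈ H¹_τ, ‖u'‖²₂ − v|u(0−)|² + ω‖u‖²₂ ≥ C ‖u‖²_{H¹_τ}. -/
open MeasureTheory Set Filter Real
open Topology

noncomputable section

structure HtauFun (τ : ℝ) where
  u : ℝ → ℝ
  d : ℝ → ℝ
  uL : ℝ
  uR : ℝ
  hderiv : ∀ x : ℝ, x ≠ 0 → HasDerivAt u (d x) x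
  hlimL : Tendsto u (nhdsWithin 0 (Iio 0)) (nhds uL)
  hlimR : Tendsto u (nhdsWithin 0 (Ioi 0)) (nhds uR)
  hint2 : Integrable (fun x => (u x) ^ 2)
  hintd : Integrable (fun x => (d x) ^ 2)
  hjump : uR = τ * uL

def dnormSq (g : ℝ → ℝ) : ℝ :=
  (∫ x in Iio (0:ℝ), (g x) ^ 2) + ∫ x in Ioi (0:ℝ), (g x) ^ 2

def l2Sq (f : ℝ → ℝ) : ℝ := ∫ x : ℝ, (f x) ^ 2

def HnormSq (f g : ℝ → ℝ) : ℝ := l2Sq f + dnormSq g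

/-! ### Auxiliary lemmas -/

lemma ae_ne_zero : ∀ᵐ x : ℝ, x ≠ 0 := by
  have h : volume ({(0:ℝ)} : Set ℝ) = 0 := measure_singleton 0
  exact compl_mem_ae_iff.mpr h

lemma htau_u_aemeasurable {τ : ℝ} (U : HtauFun τ) : AEMeasurable U.u := by
  have hcont : ContinuousOn U.u ({(0:ℝ)}ᶜ) := fun x hx =>
    ((U.hderiv x hx).continuousAt).continuousWithinAt
  have h1 : AEMeasurable U.u (volume.restrict ({(0:ℝ)}ᶜ)) :=
    hcont.aemeasurable (measurableSet_singleton 0).compl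
  have h2 : volume.restrict ({(0:ℝ)}ᶜ : Set ℝ) = volume := by
    rw [Measure.restrict_congr_set (ae_eq_univ.2 (by simp)), Measure.restrict_univ]
  rwa [h2] at h1

lemma htau_d_aemeasurable {τ : ℝ} (U : HtauFun τ) : AEMeasurable U.d := by
  have hd_ae : (fun x => deriv U.u x) =ᵐ[volume] U.d :=
    ae_ne_zero.mono fun x hx => (U.hderiv x hx).deriv
  exact (measurable_deriv U.u).aemeasurable.congr hd_ae

lemma abs_two_mul_le (a b : ℝ) : |2 * a * b| ≤ a ^ 2 + b ^ 2 :=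
  abs_le.2 ⟨by nlinarith [sq_nonneg (a + b)], by nlinarith [sq_nonneg (a - b)]⟩

lemma htau_g_integrable {τ : ℝ} (U : HtauFun τ) :
    Integrable (fun x => 2 * U.u x * U.d x) := by
  refine Integrable.mono' (U.hint2.add U.hintd)
    (((htau_u_aemeasurable U).const_mul 2).mul (htau_d_aemeasurable U)).aestronglyMeasurable
    (Eventually.of_forall fun x => ?_)
  rw [Real.norm_eq_abs]
  exact abs_two_mul_le _ _

/-- If `f^2` is integrable and tends to `M` at `-∞`, then `M = 0`. -/
lemma sq_tendsto_atBot_zero {f : ℝ → ℝ} (hf : Integrable (fun x => f x ^ 2)) {M : ℝ}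
    (h : Tendsto (fun x => f x ^ 2) atBot (𝓝 M)) : M = 0 := by
  by_contra hM
  have hM0 : 0 ≤ M := ge_of_tendsto' h fun x => sq_nonneg (f x)
  have hMpos : 0 < M := hM0.lt_of_ne (Ne.symm hM)
  have hev : ∀ᶠ x in atBot, M / 2 ≤ f x ^ 2 :=
    h.eventually (eventually_ge_nhds (show M / 2 < M by linarith))
  obtain ⟨A, hA⟩ := eventually_atBot.1 hev
  have hconst : Integrable (fun _ : ℝ => M / 2) (volume.restrict (Iic A)) := by
    refine Integrable.mono' hf.integrableOn aestronglyMeasurable_const ?_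
    rw [ae_restrict_iff' measurableSet_Iic]
    exact Eventually.of_forall fun x hx => by
      rw [Real.norm_eq_abs, abs_of_pos (by linarith)]; exact hA x hx
  rw [integrable_const_iff] at hconst
  rcases hconst with h1 | h2
  · linarith
  · replace h2 := h2.measure_univ_lt_top
    rw [Measure.restrict_apply_univ, Real.volume_Iic] at h2
    exact (lt_irrefl _ h2).elim

lemma sq_tendsto_atTop_zero {f : ℝ → ℝ} (hf : Integrable (fun x => f x ^ 2)) {M : ℝ}
    (h : Tendsto (fun x => f x ^ 2) atTop (𝓝 M)) : M = 0 := by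
  by_contra hM
  have hM0 : 0 ≤ M := ge_of_tendsto' h fun x => sq_nonneg (f x)
  have hMpos : 0 < M := hM0.lt_of_ne (Ne.symm hM)
  have hev : ∀ᶠ x in atTop, M / 2 ≤ f x ^ 2 :=
    h.eventually (eventually_ge_nhds (show M / 2 < M by linarith))
  obtain ⟨A, hA⟩ := eventually_atTop.1 hev
  have hconst : Integrable (fun _ : ℝ => M / 2) (volume.restrict (Ici A)) := by
    refine Integrable.mono' hf.integrableOn aestronglyMeasurable_const ?_
    rw [ae_restrict_iff' measurableSet_Ici]
    exact Eventually.of_forall fun x hx => by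
      rw [Real.norm_eq_abs, abs_of_pos (by linarith)]; exact hA x hx
  rw [integrable_const_iff] at hconst
  rcases hconst with h1 | h2
  · linarith
  · replace h2 := h2.measure_univ_lt_top
    rw [Measure.restrict_apply_univ, Real.volume_Ici] at h2
    exact (lt_irrefl _ h2).elim

/-- Left trace identity. -/
lemma left_trace {τ : ℝ} (U : HtauFun τ) :
    U.uL ^ 2 = ∫ x in Iio (0:ℝ), 2 * U.u x * U.d x := by
  set g : ℝ → ℝ := fun x => 2 * U.u x * U.d x with hgdef
  have hg : Integrable g := htau_g_integrable U
  have key : ∀ a : ℝ, a < 0 → U.uL ^ 2 = U.u a ^ 2 + ∫ x in a..(0:ℝ), g x := by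
    intro a ha
    have hIcc : uIcc a (0:ℝ) = Icc a 0 := uIcc_of_le ha.le
    have hcont : ContinuousOn (fun b => ∫ x in a..b, g x) (Icc a 0) := by
      have := intervalIntegral.continuousOn_primitive_interval
        (a := a) (b := (0:ℝ)) (μ := volume) (f := g) (by rw [hIcc]; exact hg.integrableOn)
      rwa [hIcc] at this
    have hF : Tendsto (fun b => ∫ x in a..b, g x) (𝓝[<] (0:ℝ))
        (𝓝 (∫ x in a..(0:ℝ), g x)) := by
      have h0 : ContinuousWithinAt (fun b => ∫ x in a..b, g x) (Icc a 0) 0 :=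
        hcont 0 (right_mem_Icc.2 ha.le)
      rw [show 𝓝[<] (0:ℝ) = 𝓝[Ioo a 0] 0 from (nhdsWithin_Ioo_eq_nhdsLT ha).symm]
      exact h0.mono_left (nhdsWithin_mono _ Ioo_subset_Icc_self)
    have hev : (fun b => ∫ x in a..b, g x) =ᶠ[𝓝[<] (0:ℝ)]
        fun b => U.u b ^ 2 - U.u a ^ 2 := by
      filter_upwards [Ioo_mem_nhdsLT ha]
        with b hb
      refine intervalIntegral.integral_eq_sub_of_hasDerivAt (f := fun y => U.u y ^ 2) (fun x hx => ?_)
        hg.intervalIntegrable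
      have hx0 : x ≠ 0 := by
        rw [uIcc_of_le hb.1.le] at hx
        exact ne_of_lt (lt_of_le_of_lt hx.2 hb.2)
      have h := (U.hderiv x hx0).pow 2
      exact h.congr_deriv (by simp [hgdef])
    have hb : Tendsto (fun b => U.u b ^ 2 - U.u a ^ 2) (𝓝[<] (0:ℝ))
        (𝓝 (U.uL ^ 2 - U.u a ^ 2)) := (U.hlimL.pow 2).sub_const _
    have := tendsto_nhds_unique (hF.congr' hev) hb
    linarith
  have h1 : Tendsto (fun a : ℝ => ∫ x in a..(0:ℝ), g x) atBot
      (𝓝 (∫ x in Iio (0:ℝ), g x)) := by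
    have := intervalIntegral_tendsto_integral_Iic (0:ℝ) (f := g) (μ := volume)
      hg.integrableOn tendsto_id
    rwa [integral_Iic_eq_integral_Iio] at this
  have hlim : Tendsto (fun a : ℝ => U.u a ^ 2) atBot
      (𝓝 (U.uL ^ 2 - ∫ x in Iio (0:ℝ), g x)) := by
    refine (tendsto_const_nhds.sub h1).congr' ?_
    filter_upwards [eventually_lt_atBot (0:ℝ)] with a ha
    have := key a ha; linarith
  have hM := sq_tendsto_atBot_zero U.hint2 hlim
  linarith

/-- Right trace identity. -/
lemma right_trace {τ : ℝ} (U : HtauFun τ) :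
    U.uR ^ 2 = - ∫ x in Ioi (0:ℝ), 2 * U.u x * U.d x := by
  set g : ℝ → ℝ := fun x => 2 * U.u x * U.d x with hgdef
  have hg : Integrable g := htau_g_integrable U
  have key : ∀ b : ℝ, 0 < b → U.u b ^ 2 = U.uR ^ 2 + ∫ x in (0:ℝ)..b, g x := by
    intro b hb
    have hIcc : uIcc (0:ℝ) b = Icc 0 b := uIcc_of_le hb.le
    have hcont : ContinuousOn (fun a => ∫ x in a..b, g x) (Icc 0 b) := by
      have := intervalIntegral.continuousOn_primitive_interval_left
        (a := (0:ℝ)) (b := b) (μ := volume) (f := g) (by rw [hIcc]; exact hg.integrableOn)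
      rwa [hIcc] at this
    have hF : Tendsto (fun a => ∫ x in a..b, g x) (𝓝[>] (0:ℝ))
        (𝓝 (∫ x in (0:ℝ)..b, g x)) := by
      have h0 : ContinuousWithinAt (fun a => ∫ x in a..b, g x) (Icc 0 b) 0 :=
        hcont 0 (left_mem_Icc.2 hb.le)
      rw [show 𝓝[>] (0:ℝ) = 𝓝[Ioo 0 b] 0 from (nhdsWithin_Ioo_eq_nhdsGT hb).symm]
      exact h0.mono_left (nhdsWithin_mono _ Ioo_subset_Icc_self)
    have hev : (fun a => ∫ x in a..b, g x) =ᶠ[𝓝[>] (0:ℝ)]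
        fun a => U.u b ^ 2 - U.u a ^ 2 := by
      filter_upwards [Ioo_mem_nhdsGT hb]
        with a ha
      refine intervalIntegral.integral_eq_sub_of_hasDerivAt (f := fun y => U.u y ^ 2)
        (fun x hx => ?_) hg.intervalIntegrable
      have hx0 : x ≠ 0 := by
        rw [uIcc_of_le ha.2.le] at hx
        exact ne_of_gt (lt_of_lt_of_le ha.1 hx.1)
      have h := (U.hderiv x hx0).pow 2
      exact h.congr_deriv (by simp [hgdef])
    have ha : Tendsto (fun a => U.u b ^ 2 - U.u a ^ 2) (𝓝[>] (0:ℝ))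
        (𝓝 (U.u b ^ 2 - U.uR ^ 2)) := tendsto_const_nhds.sub (U.hlimR.pow 2)
    have := tendsto_nhds_unique (hF.congr' hev) ha
    linarith
  have h1 : Tendsto (fun b : ℝ => ∫ x in (0:ℝ)..b, g x) atTop
      (𝓝 (∫ x in Ioi (0:ℝ), g x)) :=
    intervalIntegral_tendsto_integral_Ioi (0:ℝ) (f := g) (μ := volume)
      hg.integrableOn tendsto_id
  have hlim : Tendsto (fun b : ℝ => U.u b ^ 2) atTop
      (𝓝 (U.uR ^ 2 + ∫ x in Ioi (0:ℝ), g x)) := by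
    refine (tendsto_const_nhds.add h1).congr' ?_
    filter_upwards [eventually_gt_atTop (0:ℝ)] with b hb
    exact (key b hb).symm
  have hM := sq_tendsto_atTop_zero U.hint2 hlim
  linarith

set_option maxHeartbeats 1000000 in
/-- coercivity: if `ω > v²/(τ²+1)²` then there is `C > 0` such that for all
`u ∈ H¹_τ` one has `‖u'‖₂² - v|u(0-)|² + ω‖u‖₂² ≥ C‖u‖²_{H¹_τ}`. -/
theorem coercivity_Htau
    (τ v ω : ℝ) (hτ0 : τ ≠ 0) (hτ1 : τ ≠ 1) (hτm1 : τ ≠ -1) (hv : 0 < v)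
    (hω : ω > v ^ 2 / (τ ^ 2 + 1) ^ 2) :
    ∃ C : ℝ, 0 < C ∧ ∀ U : HtauFun τ,
      dnormSq U.d - v * U.uL ^ 2 + ω * l2Sq U.u ≥ C * HnormSq U.u U.d := by
  have hτ2 : (0:ℝ) < τ ^ 2 + 1 := by positivity
  set k : ℝ := v / (τ ^ 2 + 1) with hk
  have hkpos : 0 < k := div_pos hv hτ2
  have hk2 : k ^ 2 < ω := by rw [hk, div_pow]; exact hω
  have hωpos : 0 < ω := lt_of_le_of_lt (sq_nonneg k) hk2
  set ε : ℝ := (k / ω + 1 / k) / 2 with hεdef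
  have h1 : k / ω < 1 / k := by
    rw [div_lt_div_iff₀ hωpos hkpos]; nlinarith
  have hεpos : 0 < ε := by
    have : 0 < k / ω := div_pos hkpos hωpos
    have : 0 < 1 / k := by positivity
    rw [hεdef]; positivity
  have hε1 : k * ε < 1 := by
    have hlt : ε < 1 / k := by rw [hεdef]; linarith
    have := mul_lt_mul_of_pos_left hlt hkpos
    rwa [mul_one_div, div_self (ne_of_gt hkpos)] at this
  have hε2 : k * ε⁻¹ < ω := by
    have hgt : k / ω < ε := by rw [hεdef]; linarith
    rw [← div_eq_mul_inv, div_lt_iff₀ hεpos]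
    calc k = ω * (k / ω) := by field_simp
    _ < ω * ε := by exact mul_lt_mul_of_pos_left hgt hωpos
  refine ⟨min (1 - k * ε) (ω - k * ε⁻¹), lt_min (by linarith) (by linarith), fun U => ?_⟩
  set D := dnormSq U.d with hD0
  set L := l2Sq U.u with hL0
  have hD : 0 ≤ D :=
    add_nonneg (setIntegral_nonneg measurableSet_Iio fun x _ => sq_nonneg _)
      (setIntegral_nonneg measurableSet_Ioi fun x _ => sq_nonneg _)
  have hL : 0 ≤ L := integral_nonneg fun x => sq_nonneg _
  -- split the L² norm over the two half-lines
  have hvol : volume.restrict ({(0:ℝ)}ᶜ : Set ℝ) = volume := by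
    rw [Measure.restrict_congr_set (ae_eq_univ.2 (by simp)), Measure.restrict_univ]
  have hsplit : L = (∫ x in Iio (0:ℝ), U.u x ^ 2) + ∫ x in Ioi (0:ℝ), U.u x ^ 2 := by
    have hdisj : Disjoint (Iio (0:ℝ)) (Ioi (0:ℝ)) :=
      (Iio_disjoint_Ici le_rfl).mono_right Ioi_subset_Ici_self
    have hu := setIntegral_union hdisj measurableSet_Ioi
      (U.hint2.integrableOn (s := Iio 0)) (U.hint2.integrableOn (s := Ioi 0))
    rw [Iio_union_Ioi] at hu
    calc L = ∫ x : ℝ, U.u x ^ 2 := rfl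
    _ = ∫ x in ({(0:ℝ)}ᶜ : Set ℝ), U.u x ^ 2 := by rw [hvol]
    _ = _ := hu
  -- AM-GM pointwise bounds
  have amgm : ∀ a b : ℝ, 2 * a * b ≤ ε * b ^ 2 + ε⁻¹ * a ^ 2 := by
    intro a b
    have h := sq_nonneg (ε * b - a)
    have hid : ε * (ε * b ^ 2 + ε⁻¹ * a ^ 2 - 2 * a * b) = (ε * b - a) ^ 2 := by
      field_simp; ring
    nlinarith [hεpos]
  have amgm' : ∀ a b : ℝ, -(2 * a * b) ≤ ε * b ^ 2 + ε⁻¹ * a ^ 2 := by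
    intro a b
    have h := amgm (-a) b
    nlinarith [h]
  -- integrability
  have hgInt : Integrable (fun x => 2 * U.u x * U.d x) := htau_g_integrable U
  have hRHSInt : Integrable (fun x => ε * U.d x ^ 2 + ε⁻¹ * U.u x ^ 2) :=
    (U.hintd.const_mul ε).add (U.hint2.const_mul ε⁻¹)
  have hL1 : U.uL ^ 2 ≤ ∫ x in Iio (0:ℝ), (ε * U.d x ^ 2 + ε⁻¹ * U.u x ^ 2) := by
    rw [left_trace U]
    exact setIntegral_mono hgInt.integrableOn hRHSInt.integrableOn fun x => amgm _ _
  have hR1 : U.uR ^ 2 ≤ ∫ x in Ioi (0:ℝ), (ε * U.d x ^ 2 + ε⁻¹ * U.u x ^ 2) := by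
    rw [right_trace U, ← integral_neg]
    exact setIntegral_mono hgInt.neg.integrableOn hRHSInt.integrableOn fun x => amgm' _ _
  -- compute the right-hand sides
  have hcalc : ∀ s : Set ℝ, IntegrableOn (fun x => U.d x ^ 2) s →
      IntegrableOn (fun x => U.u x ^ 2) s →
      (∫ x in s, (ε * U.d x ^ 2 + ε⁻¹ * U.u x ^ 2))
        = ε * (∫ x in s, U.d x ^ 2) + ε⁻¹ * ∫ x in s, U.u x ^ 2 := by
    intro s hd hu
    rw [integral_add (hd.const_mul ε) (hu.const_mul ε⁻¹), integral_const_mul,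
      integral_const_mul]
  rw [hcalc _ U.hintd.integrableOn U.hint2.integrableOn] at hL1 hR1
  -- trace bound
  have htrace : (τ ^ 2 + 1) * U.uL ^ 2 ≤ ε * D + ε⁻¹ * L := by
    have hjump2 : U.uR ^ 2 = τ ^ 2 * U.uL ^ 2 := by rw [U.hjump]; ring
    rw [hsplit, hD0, dnormSq]
    nlinarith [hL1, hR1]
  have hvk : v = k * (τ ^ 2 + 1) := by rw [hk]; field_simp
  have hvtrace : v * U.uL ^ 2 ≤ k * ε * D + k * ε⁻¹ * L := by
    have := mul_le_mul_of_nonneg_left htrace hkpos.le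
    calc v * U.uL ^ 2 = k * ((τ ^ 2 + 1) * U.uL ^ 2) := by rw [hvk]; ring
    _ ≤ k * (ε * D + ε⁻¹ * L) := this
    _ = k * ε * D + k * ε⁻¹ * L := by ring
  have e1 : min (1 - k * ε) (ω - k * ε⁻¹) ≤ 1 - k * ε := min_le_left _ _
  have e2 : min (1 - k * ε) (ω - k * ε⁻¹) ≤ ω - k * ε⁻¹ := min_le_right _ _
  have hHn : HnormSq U.u U.d = L + D := rfl
  rw [hHn, ge_iff_le]
  nlinarith [mul_nonneg (sub_nonneg.2 e1) hD, mul_nonneg (sub_nonneg.2 e2) hL, hvtrace]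
end
end

section
/- Let τ > 0, τ ∉ {0,1}, v > 0, μ > 0, ω > 0. A function of the form u(x) = φ_ω(x + x₋) on ℝ₋ and u(x) = φ_ω(x + x₊) on ℝ₊, with φ_ω(x) = (ω(μ+1))^{1/(2μ)} cosh^{−1/μ}(μ√ω x), satisfies the Fülöp–Tsutsui conditions u(0+) = τu(0−) and u'(0−) − τu'(0+) = vu(0−) if and only if T_± = tanh(μ√ω x_±) solve the system: T₊ = (1/τ²)(T₋ + v/√ω) and T₋²/(1 − τ^{−2μ}) − T₊²/(τ^{2μ} − 1) = 1. -/
open Set Filter Real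

noncomputable section

/-- The one-dimensional NLS soliton `φ_ω(x) = (ω(μ+1))^{1/(2μ)} cosh^{-1/μ}(μ√ω x)`. -/
def soliton (μ ω : ℝ) (x : ℝ) : ℝ :=
  (ω * (μ + 1)) ^ (1 / (2 * μ)) * (Real.cosh (μ * Real.sqrt ω * x)) ^ (-(1 / μ))

lemma one_sub_tanh_sq (y : ℝ) : 1 - Real.tanh y ^ 2 = (Real.cosh y ^ 2)⁻¹ := by
  have hc : Real.cosh y ≠ 0 := (Real.cosh_pos y).ne'
  rw [Real.tanh_eq_sinh_div_cosh]
  field_simp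
  linarith [Real.cosh_sq y]

lemma soliton_tanh (μ ω : ℝ) (hμ : 0 < μ) (hω : 0 < ω) (x : ℝ) :
    1 - Real.tanh (μ * Real.sqrt ω * x) ^ 2
      = (soliton μ ω x / (ω * (μ + 1)) ^ (1 / (2 * μ))) ^ (2 * μ) := by
  have h1 : 0 < (ω * (μ + 1) : ℝ) := by nlinarith
  have hC : ((ω * (μ + 1)) ^ (1 / (2 * μ)) : ℝ) ≠ 0 := (Real.rpow_pos_of_pos h1 _).ne'
  have hs : soliton μ ω x / (ω * (μ + 1)) ^ (1 / (2 * μ))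
      = Real.cosh (μ * Real.sqrt ω * x) ^ (-(1 / μ)) := by
    rw [soliton, mul_comm, mul_div_assoc, div_self hC, mul_one]
  rw [hs, ← Real.rpow_mul (Real.cosh_pos _).le]
  have he : -(1 / μ) * (2 * μ) = -2 := by field_simp
  rw [he, Real.rpow_neg (Real.cosh_pos _).le,
    show ((2 : ℝ)) = ((2 : ℕ) : ℝ) by norm_num, Real.rpow_natCast, one_sub_tanh_sq]

lemma soliton_pos (μ ω : ℝ) (hμ : 0 < μ) (hω : 0 < ω) (x : ℝ) : 0 < soliton μ ω x := by
  unfold soliton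
  have h1 : 0 < ω * (μ + 1) := by nlinarith
  exact mul_pos (Real.rpow_pos_of_pos h1 _) (Real.rpow_pos_of_pos (Real.cosh_pos _) _)

lemma soliton_hasDerivAt (μ ω : ℝ) (hμ : 0 < μ) (hω : 0 < ω) (x : ℝ) :
    HasDerivAt (soliton μ ω)
      (-Real.sqrt ω * soliton μ ω x * Real.tanh (μ * Real.sqrt ω * x)) x := by
  set a := μ * Real.sqrt ω with ha
  have h1 : HasDerivAt (fun x : ℝ => a * x) a x := by
    simpa using (hasDerivAt_id x).const_mul a
  have h2 : HasDerivAt (fun x : ℝ => Real.cosh (a * x)) (Real.sinh (a * x) * a) x :=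
    (Real.hasDerivAt_cosh (a * x)).comp x h1
  have hc : Real.cosh (a * x) ≠ 0 := (Real.cosh_pos _).ne'
  have h3 := (Real.hasDerivAt_rpow_const (p := -(1 / μ)) (Or.inl hc)).comp x h2
  have h4 := h3.const_mul ((ω * (μ + 1)) ^ (1 / (2 * μ)))
  have hfun : (fun x : ℝ => (ω * (μ + 1)) ^ (1 / (2 * μ)) *
      ((fun y => y ^ (-(1 / μ))) ∘ fun x => Real.cosh (a * x)) x) = soliton μ ω := by
    funext y; simp [soliton, ha, Function.comp]
  rw [hfun] at h4
  refine h4.congr_deriv ?_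
  symm
  have hrc : Real.cosh (a * x) ^ (-(1 / μ) - 1)
      = Real.cosh (a * x) ^ (-(1 / μ)) / Real.cosh (a * x) := Real.rpow_sub_one hc _
  rw [soliton, Real.tanh_eq_sinh_div_cosh, hrc, ha]
  have hμ' : μ ≠ 0 := hμ.ne'
  field_simp

/-- a two-sided soliton profile `u(x) = φ_ω(x + x₋)` on `ℝ₋`,
`u(x) = φ_ω(x + x₊)` on `ℝ₊` satisfies the Fülöp–Tsutsui conditions
`u(0+) = τ u(0-)` and `u'(0-) - τ u'(0+) = v u(0-)` if and only if
`T_± = tanh(μ√ω x_±)` solve the matching system. -/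
theorem soliton_matching_iff
    (τ v ω μ : ℝ) (hτ : 0 < τ) (hτ1 : τ ≠ 1) (hv : 0 < v) (hμ : 0 < μ) (hω : 0 < ω)
    (xm xp Tm Tp : ℝ)
    (hTm : Tm = Real.tanh (μ * Real.sqrt ω * xm))
    (hTp : Tp = Real.tanh (μ * Real.sqrt ω * xp)) :
    (soliton μ ω xp = τ * soliton μ ω xm ∧
      deriv (soliton μ ω) xm - τ * deriv (soliton μ ω) xp = v * soliton μ ω xm)
    ↔
    (Tp = 1 / τ ^ 2 * (Tm + v / Real.sqrt ω) ∧
      Tm ^ 2 / (1 - τ ^ (-(2 * μ))) - Tp ^ 2 / (τ ^ (2 * μ) - 1) = 1) := by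
  have hs0 : 0 < Real.sqrt ω := Real.sqrt_pos.mpr hω
  set s := Real.sqrt ω with hsdef
  have hs' : s ≠ 0 := hs0.ne'
  have hτ' : τ ≠ 0 := hτ.ne'
  have hC1 : 0 < (ω * (μ + 1) : ℝ) := by nlinarith
  set C := ((ω * (μ + 1)) ^ (1 / (2 * μ)) : ℝ) with hCdef
  have hC : 0 < C := Real.rpow_pos_of_pos hC1 _
  have hφm : 0 < soliton μ ω xm := soliton_pos μ ω hμ hω xm
  have hφp : 0 < soliton μ ω xp := soliton_pos μ ω hμ hω xp
  have hφm' : soliton μ ω xm ≠ 0 := hφm.ne'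
  have hdm : deriv (soliton μ ω) xm = -s * soliton μ ω xm * Tm := by
    rw [(soliton_hasDerivAt μ ω hμ hω xm).deriv, hTm]
  have hdp : deriv (soliton μ ω) xp = -s * soliton μ ω xp * Tp := by
    rw [(soliton_hasDerivAt μ ω hμ hω xp).deriv, hTp]
  set A := (τ ^ (2 * μ) : ℝ) with hAdef
  have hA : 0 < A := Real.rpow_pos_of_pos hτ _
  have hA1 : A ≠ 1 := by
    rcases lt_trichotomy τ 1 with h | h | h
    · exact ne_of_lt (Real.rpow_lt_one hτ.le h (by positivity))
    · exact absurd h hτ1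
    · exact ne_of_gt (Real.one_lt_rpow_iff_of_pos hτ |>.mpr (Or.inl ⟨h, by positivity⟩))
  have hAneg : (τ ^ (-(2 * μ)) : ℝ) = A⁻¹ := Real.rpow_neg hτ.le _
  have h1ne : (1 : ℝ) - A⁻¹ ≠ 0 := by
    rw [sub_ne_zero]
    exact fun h => hA1 (inv_eq_one.mp h.symm)
  have h2ne : A - 1 ≠ 0 := sub_ne_zero.mpr hA1
  have hm1 : 1 - Tm ^ 2 = (soliton μ ω xm / C) ^ (2 * μ) := by
    rw [hTm]; exact soliton_tanh μ ω hμ hω xm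
  have hp1 : 1 - Tp ^ 2 = (soliton μ ω xp / C) ^ (2 * μ) := by
    rw [hTp]; exact soliton_tanh μ ω hμ hω xp
  have claim1 : soliton μ ω xp = τ * soliton μ ω xm ↔ 1 - Tp ^ 2 = A * (1 - Tm ^ 2) := by
    constructor
    · intro h
      rw [hp1, hm1, h, mul_div_assoc, Real.mul_rpow hτ.le (by positivity)]
    · intro h
      rw [hp1, hm1, ← Real.mul_rpow hτ.le (by positivity)] at h
      have cancel : ∀ y : ℝ, 0 < y → (y ^ (2 * μ)) ^ ((2 * μ)⁻¹) = y := by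
        intro y hy
        rw [← Real.rpow_mul hy.le, mul_inv_cancel₀ (by positivity), Real.rpow_one]
      have h2 : soliton μ ω xp / C = τ * (soliton μ ω xm / C) := by
        have h3 : ((soliton μ ω xp / C) ^ (2 * μ)) ^ ((2 * μ)⁻¹)
            = ((τ * (soliton μ ω xm / C)) ^ (2 * μ)) ^ ((2 * μ)⁻¹) := by rw [h]
        rwa [cancel _ (div_pos hφp hC), cancel _ (mul_pos hτ (div_pos hφm hC))] at h3
      calc soliton μ ω xp = soliton μ ω xp / C * C := (div_mul_cancel₀ _ hC.ne').symm
        _ = τ * (soliton μ ω xm / C) * C := by rw [h2]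
        _ = τ * soliton μ ω xm := by rw [mul_assoc, div_mul_cancel₀ _ hC.ne']
  have key : Tm ^ 2 / (1 - A⁻¹) - Tp ^ 2 / (A - 1) - 1
      = ((1 - Tp ^ 2) - A * (1 - Tm ^ 2)) / (A - 1) := by
    field_simp
    ring
  have claim2 : (1 - Tp ^ 2 = A * (1 - Tm ^ 2)) ↔
      Tm ^ 2 / (1 - A⁻¹) - Tp ^ 2 / (A - 1) = 1 := by
    constructor
    · intro h
      have h0 := key
      rw [← h, sub_self, zero_div] at h0
      linarith
    · intro h
      have h0 : Tm ^ 2 / (1 - A⁻¹) - Tp ^ 2 / (A - 1) - 1 = 0 := by rw [h]; ring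
      rw [key, div_eq_zero_iff] at h0
      rcases h0 with h0 | h0
      · linarith
      · exact absurd h0 h2ne
  have hvs : v / s * s = v := div_mul_cancel₀ v hs'
  constructor
  · rintro ⟨e1, e2⟩
    refine ⟨?_, by rw [hAneg]; exact claim2.mp (claim1.mp e1)⟩
    rw [hdm, hdp, e1] at e2
    have e2' : (τ ^ 2 * Tp * s - Tm * s - v) * soliton μ ω xm = 0 * soliton μ ω xm := by
      linear_combination e2
    have e2'' : τ ^ 2 * Tp * s - Tm * s - v = 0 := mul_right_cancel₀ hφm' e2'
    field_simp
    linear_combination e2''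
  · rintro ⟨e1, e2⟩
    rw [hAneg] at e2
    have hφ : soliton μ ω xp = τ * soliton μ ω xm := claim1.mpr (claim2.mpr e2)
    refine ⟨hφ, ?_⟩
    rw [hdm, hdp, hφ]
    have e1' : τ ^ 2 * Tp * s = Tm * s + v := by
      rw [e1]
      field_simp
    linear_combination soliton μ ω xm * e1'
end
end
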